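/- arXiv:0711.2503 — 2 statements merged into one kernel-verified Lean document; each statement's English description precedes it below -/
import Mathlib

section
/- For m ∈ ℕ, m ≥ 1, and real z > 0 define G_{2m}(z) = z^{−2m} · Σ_{s=1}^{m} d₂(2m,s) z^s. Let α ∈ (0,1), z > 0, and set m_z = ⌊αز/4⌋ (the floor of αz/4). If m_z ≥ 1, then G_{2m_z}(z) ≤ α^{m_z} / (4(1−α)). -/
open MeasureTheory Complex Matrix

noncomputable section

/-- The time-frequency shift `π(λ) = M_ℓ T_k` applied to a window `g ∈ ℂ^n`:
`(π(k,ℓ)g)_q = e^{2πiℓq/n} g_{(k+q) mod n}`. -/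
def tfShift (n : ℕ) (lam : Fin n × Fin n) (g : Fin n → ℂ) : Fin n → ℂ :=
  fun q => Complex.exp (2 * Real.pi * Complex.I * (lam.2 : ℕ) * (q : ℕ) / n) * g (lam.1 + q)

/-- The time-frequency shift `π(λ) = M_ℓ T_k` as an `n × n` matrix. -/
def tfMatrix (n : ℕ) (lam : Fin n × Fin n) : Matrix (Fin n) (Fin n) ℂ :=
  Matrix.of fun q p =>
    if p = lam.1 + q then Complex.exp (2 * Real.pi * Complex.I * (lam.2 : ℕ) * (q : ℕ) / n) else 0

/-- The Gabor synthesis matrix `Ψ_g ∈ ℂ^{n × n²}`, columns `π(λ)g`. -/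
def gaborMatrix (n : ℕ) (g : Fin n → ℂ) : Matrix (Fin n) (Fin n × Fin n) ℂ :=
  Matrix.of fun q lam => tfShift n lam g q

/-- The column submatrix of a matrix, columns restricted to a finite index set `Λ`. -/
def colSub {ι κ : Type*} (A : Matrix ι κ ℂ) (Λ : Finset κ) : Matrix ι ↥Λ ℂ :=
  Matrix.of fun i j => A i (j : κ)

/-- The column submatrix `Ψ_Λ` of the Gabor synthesis matrix. -/
def gaborSub (n : ℕ) (g : Fin n → ℂ) (Λ : Finset (Fin n × Fin n)) : Matrix (Fin n) ↥Λ ℂ :=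
  colSub (gaborMatrix n g) Λ

/-- The ℓ¹ norm of a vector in `ℂ^ι`. -/
def l1norm {ι : Type*} [Fintype ι] (z : ι → ℂ) : ℝ := ∑ i, ‖z i‖

/-- The ℓ² (Euclidean) norm of a vector in `ℂ^ι`. -/
def l2norm {ι : Type*} [Fintype ι] (z : ι → ℂ) : ℝ := Real.sqrt (∑ i, ‖z i‖ ^ 2)

/-- The standard Hermitian inner product `⟨u,v⟩ = ∑ u_i conj(v_i)` on `ℂ^ι`. -/
def dotc {ι : Type*} [Fintype ι] (u v : ι → ℂ) : ℂ := ∑ i, u i * (starRingEnd ℂ) (v i)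

/-- `x` is the unique minimizer of the ℓ¹ norm among all `z` with `A z = A x`
(Basis Pursuit recovers `x` from `y = A x`). -/
def BPrecovers {ι κ : Type*} [Fintype ι] [Fintype κ] (A : Matrix ι κ ℂ) (x : κ → ℂ) : Prop :=
  ∀ z : κ → ℂ, A.mulVec z = A.mulVec x → z ≠ x → l1norm x < l1norm z

/-- The spectral norm (`ℓ² → ℓ²` operator norm) of a complex matrix. -/
def specNorm {ι κ : Type*} [Fintype ι] [Fintype κ] [DecidableEq κ] (A : Matrix ι κ ℂ) : ℝ :=
  ‖LinearMap.toContinuousLinearMap (Matrix.toEuclideanLin A)‖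

/-- The Frobenius norm of a complex matrix. -/
def frobNorm {ι κ : Type*} [Fintype ι] [Fintype κ] (A : Matrix ι κ ℂ) : ℝ :=
  Real.sqrt (∑ i, ∑ j, ‖A i j‖ ^ 2)

/-- The complex sign: `sgn(z) = z/|z|` for `z ≠ 0`, and `sgn(0) = 0`. -/
def csgn (z : ℂ) : ℂ := if z = 0 then 0 else z / (‖z‖ : ℂ)

/-- The associated Stirling number of the first kind `d₂(m,s)`: the number of permutations
of an `m`-element set consisting of exactly `s` disjoint cycles, each of length at least 2
(equivalently, fixed-point-free permutations of `Fin m` with exactly `s` cycles). -/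
def d2 (m s : ℕ) : ℕ :=
  Fintype.card {σ : Equiv.Perm (Fin m) // σ.cycleType.card = s ∧ σ.cycleType.sum = m}

instance : MeasurableSpace Circle := borel Circle
instance : BorelSpace Circle := ⟨rfl⟩

/-- The normalized Haar (uniform) probability measure on the circle group
`{z ∈ ℂ : |z| = 1}`. -/
def circleHaar : Measure Circle :=
  Measure.haarMeasure (⊤ : TopologicalSpace.PositiveCompacts Circle)

instance : IsProbabilityMeasure circleHaar :=
  ⟨by simpa [circleHaar] using Measure.haarMeasure_self (K₀ := (⊤ : TopologicalSpace.PositiveCompacts Circle))⟩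

/-- The random unimodular window `g^R_q = ε_q/√n` determined by the phases `ε : Fin n → Circle`. -/
def windowR (n : ℕ) (ε : Fin n → Circle) : Fin n → ℂ :=
  fun q => (ε q : ℂ) / Real.sqrt n

/-- The distribution of `n` independent Haar-uniform points on the circle
(the law of the random phases `ε_0, …, ε_{n-1}`). -/
def Pmeas (n : ℕ) : Measure (Fin n → Circle) := Measure.pi fun _ => circleHaar

/-- The extension-by-zero matrix `E_Λ : ℂ^Λ → ℂ^κ`. -/
def extMat {κ : Type*} [DecidableEq κ] (Λ : Finset κ) : Matrix κ ↥Λ ℂ :=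
  Matrix.of fun j lam => if j = (lam : κ) then 1 else 0

/-- Pad a matrix with columns indexed by `Λ` to one with columns indexed by all of `κ`,
filling with zero columns: the matrix `K R_Λ` where `R_Λ` is the restriction operator. -/
def padCols {ι κ : Type*} [DecidableEq κ] {Λ : Finset κ} (K : Matrix ι ↥Λ ℂ) : Matrix ι κ ℂ :=
  Matrix.of fun i j => if h : j ∈ Λ then K i ⟨j, h⟩ else 0

end

/-- The auxiliary function `G_{2m}(z) = z^{-2m} ∑_{s=1}^m d₂(2m,s) z^s`. -/
noncomputable def G2m (m : ℕ) (z : ℝ) : ℝ :=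
  z ^ (-(2 * m : ℤ)) * ∑ s ∈ Finset.Icc 1 m, (d2 (2 * m) s : ℝ) * z ^ s

section G2mBoundAux

private lemma choose_le_two_pow' (n k : ℕ) : n.choose k ≤ 2 ^ n := by
  rcases le_or_gt k n with h | h
  · calc n.choose k ≤ ∑ i ∈ Finset.range (n+1), n.choose i :=
          Finset.single_le_sum (fun i _ => Nat.zero_le _) (Finset.mem_range.mpr (by omega))
      _ = 2 ^ n := Nat.sum_range_choose n
  · rw [Nat.choose_eq_zero_of_lt h]; exact Nat.zero_le _

private lemma L4' (m : ℕ) (hm : 1 ≤ m) : 2 * m ^ m ≤ (m + 1) ^ m := by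
  have hm0 : (0:ℝ) < m := by exact_mod_cast hm
  have hneg : (-2:ℝ) ≤ 1 / m := by
    have h01 : (0:ℝ) ≤ 1/m := by positivity
    linarith
  have h := one_add_mul_le_pow hneg m
  have h2 : (2:ℝ) ≤ (1 + 1/(m:ℝ)) ^ m := by
    have heq : 1 + (m:ℝ) * (1/m) = 2 := by field_simp; ring
    linarith [h, heq]
  have h3 : (2:ℝ) * m ^ m ≤ ((m:ℝ) + 1) ^ m := by
    have := mul_le_mul_of_nonneg_right h2 (le_of_lt (pow_pos hm0 m))
    calc (2:ℝ) * m ^ m ≤ (1 + 1/(m:ℝ))^m * m^m := this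
      _ = ((1 + 1/(m:ℝ)) * m)^m := by rw [mul_pow]
      _ = ((m:ℝ) + 1)^m := by congr 1; field_simp
  exact_mod_cast h3

private lemma L2' (m : ℕ) (hm : 6 ≤ m) : 4 * (2*m).factorial ≤ m.factorial * (2*m) ^ m := by
  induction m, hm using Nat.le_induction with
  | base => norm_num [Nat.factorial]
  | succ m hm ih =>
    have key : (2*m+1) * (2*m) ^ m ≤ (m+1) * (2*(m+1)) ^ m := by
      have h1 : 2 * (2*m) ^ m ≤ (2*(m+1)) ^ m := by
        have := L4' m (by omega)
        calc 2 * (2*m)^m = 2 * (2^m * m^m) := by rw [mul_pow]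
          _ = 2^m * (2 * m^m) := by ring
          _ ≤ 2^m * (m+1)^m := Nat.mul_le_mul_left _ this
          _ = (2*(m+1))^m := by rw [mul_pow]
      calc (2*m+1) * (2*m)^m ≤ (2*(m+1)) * (2*m)^m := by
            apply Nat.mul_le_mul_right; omega
        _ = (m+1) * (2 * (2*m)^m) := by ring
        _ ≤ (m+1) * (2*(m+1))^m := Nat.mul_le_mul_left _ h1
    calc 4 * (2*(m+1)).factorial = (2*m+2) * ((2*m+1) * (4 * (2*m).factorial)) := by
          have : 2*(m+1) = (2*m+1) + 1 := by ring
          rw [this]; rw [Nat.factorial_succ]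
          have : 2*m+1 = (2*m) + 1 := by ring
          rw [this, Nat.factorial_succ]; ring
      _ ≤ (2*m+2) * ((2*m+1) * (m.factorial * (2*m) ^ m)) := by
          apply Nat.mul_le_mul_left; apply Nat.mul_le_mul_left _ ih
      _ = (2*m+2) * (m.factorial * ((2*m+1) * (2*m) ^ m)) := by ring
      _ ≤ (2*m+2) * (m.factorial * ((m+1) * (2*(m+1)) ^ m)) := by
          apply Nat.mul_le_mul_left; exact Nat.mul_le_mul_left _ key
      _ = (m+1).factorial * (2*(m+1)) ^ (m+1) := by
          rw [Nat.factorial_succ, pow_succ]; ring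

private lemma L1' (m s : ℕ) (hsm : s ≤ m) : m.factorial ≤ s.factorial * (2*m) ^ (m - s) := by
  have hid := Nat.factorial_mul_descFactorial (n := m) (k := m - s) (by omega)
  have h2 : m - (m - s) = s := by omega
  rw [h2] at hid
  calc m.factorial = s.factorial * m.descFactorial (m - s) := hid.symm
    _ ≤ s.factorial * m ^ (m - s) := Nat.mul_le_mul_left _ (Nat.descFactorial_le_pow _ _)
    _ ≤ s.factorial * (2*m) ^ (m - s) := by
        apply Nat.mul_le_mul_left; apply Nat.pow_le_pow_left; omega

private lemma Ldagger (m s : ℕ) (hm : 6 ≤ m) (hsm : s ≤ m) :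
    4 * (2*m).factorial ≤ s.factorial * (2*m) ^ (2*m - s) := by
  have h1 := L2' m hm
  have h2 := L1' m s hsm
  have h3 : (2*m : ℕ) ^ (2*m - s) = (2*m)^(m - s) * (2*m)^m := by
    rw [← pow_add]; congr 1; omega
  calc 4 * (2*m).factorial ≤ m.factorial * (2*m)^m := h1
    _ ≤ (s.factorial * (2*m)^(m-s)) * (2*m)^m := Nat.mul_le_mul_right _ h2
    _ = s.factorial * (2*m)^(2*m-s) := by rw [h3]; ring

/-- The key numeric inequality. -/
private lemma KEY (m s : ℕ) (hm : 2 ≤ m) (hs1 : 1 ≤ s) (hsm : s ≤ m) :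
    4 * ((2*m).choose s * ((2*m - s).descFactorial s * (2*m - s).descFactorial (2*m - 2*s)))
      ≤ (4*m) ^ (2*m - s) := by
  rcases le_or_gt 6 m with h6 | h6
  · -- reduce by multiplying both sides by s! * s! * (2m-2s)!
    have hss : s ≤ 2*m - s := by omega
    have hI1 : (2*m - s).descFactorial s * (2*m - 2*s).factorial = (2*m - s).factorial := by
      have := Nat.factorial_mul_descFactorial (n := 2*m - s) (k := s) hss
      have h2 : 2*m - s - s = 2*m - 2*s := by omega
      rw [h2] at this; linarith [this]
    have hI2 : (2*m - s).descFactorial (2*m - 2*s) * s.factorial = (2*m - s).factorial := by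
      have := Nat.factorial_mul_descFactorial (n := 2*m - s) (k := 2*m - 2*s) (by omega)
      have h2 : 2*m - s - (2*m - 2*s) = s := by omega
      rw [h2] at this; linarith [this]
    have hI3 : (2*m).choose s * s.factorial * (2*m - s).factorial = (2*m).factorial :=
      Nat.choose_mul_factorial_mul_factorial (by omega)
    have hC : (2*m - s).factorial ≤ 2 ^ (2*m - s) * (s.factorial * (2*m - 2*s).factorial) := by
      have hch := Nat.choose_mul_factorial_mul_factorial (n := 2*m - s) (k := s) hss
      have h2 : 2*m - s - s = 2*m - 2*s := by omega
      rw [h2] at hch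
      calc (2*m-s).factorial = (2*m-s).choose s * s.factorial * (2*m-2*s).factorial := hch.symm
        _ ≤ 2^(2*m-s) * s.factorial * (2*m-2*s).factorial := by
            apply Nat.mul_le_mul_right; apply Nat.mul_le_mul_right
            exact choose_le_two_pow' _ _
        _ = 2^(2*m-s) * (s.factorial * (2*m-2*s).factorial) := by ring
    -- (★): 4 * (2m)! * (2m-s)! ≤ (4m)^(2m-s) * (s! * s! * (2m-2s)!)
    have star : 4 * ((2*m).factorial * (2*m - s).factorial)
        ≤ (4*m)^(2*m-s) * (s.factorial * (s.factorial * (2*m - 2*s).factorial)) := by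
      have hd := Ldagger m s h6 hsm
      calc 4 * ((2*m).factorial * (2*m-s).factorial)
          = (4 * (2*m).factorial) * (2*m-s).factorial := by ring
        _ ≤ (4 * (2*m).factorial) * (2^(2*m-s) * (s.factorial * (2*m-2*s).factorial)) :=
            Nat.mul_le_mul_left _ hC
        _ ≤ (s.factorial * (2*m)^(2*m-s)) * (2^(2*m-s) * (s.factorial * (2*m-2*s).factorial)) :=
            Nat.mul_le_mul_right _ hd
        _ = ((2:ℕ)^(2*m-s) * (2*m)^(2*m-s)) * (s.factorial * (s.factorial * (2*m-2*s).factorial)) := by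
            ring
        _ = (4*m)^(2*m-s) * (s.factorial * (s.factorial * (2*m-2*s).factorial)) := by
            have h24 : (2:ℕ)*(2*m) = 4*m := by ring
            rw [← mul_pow, h24]
    -- cancel
    have hpos : 0 < s.factorial * (s.factorial * (2*m - 2*s).factorial) :=
      Nat.mul_pos (Nat.factorial_pos _) (Nat.mul_pos (Nat.factorial_pos _) (Nat.factorial_pos _))
    refine Nat.le_of_mul_le_mul_right ?_ hpos
    calc 4 * ((2*m).choose s * ((2*m-s).descFactorial s * (2*m-s).descFactorial (2*m-2*s)))
          * (s.factorial * (s.factorial * (2*m-2*s).factorial))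
        = 4 * ((2*m).choose s * s.factorial *
            (((2*m-s).descFactorial s * (2*m-2*s).factorial) *
             ((2*m-s).descFactorial (2*m-2*s) * s.factorial))) := by ring
      _ = 4 * ((2*m).choose s * s.factorial * ((2*m-s).factorial * (2*m-s).factorial)) := by
            rw [hI1, hI2]
      _ = 4 * ((2*m).factorial * (2*m-s).factorial) := by
            rw [← hI3]; ring
      _ ≤ (4*m)^(2*m-s) * (s.factorial * (s.factorial * (2*m-2*s).factorial)) := star
  · interval_cases m <;> interval_cases s <;> decide



namespace G2mAux
open Equiv Equiv.Perm Finset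

variable {N : ℕ}

/-- The set of minima of the cycles of `σ`. -/
def minSet (σ : Equiv.Perm (Fin N)) : Finset (Fin N) :=
  Finset.univ.filter fun x => ∀ y, σ.SameCycle x y → x ≤ y

lemma mem_minSet {σ : Equiv.Perm (Fin N)} {x : Fin N} :
    x ∈ minSet σ ↔ ∀ y, σ.SameCycle x y → x ≤ y := by
  simp [minSet]

lemma minSet_unique {σ : Equiv.Perm (Fin N)} {x y : Fin N} (hx : x ∈ minSet σ)
    (hy : y ∈ minSet σ) (hxy : σ.SameCycle x y) : x = y :=
  le_antisymm (mem_minSet.mp hx y hxy) (mem_minSet.mp hy x hxy.symm)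

lemma exists_minSet_sameCycle (σ : Equiv.Perm (Fin N)) (x : Fin N) :
    ∃ z ∈ minSet σ, σ.SameCycle x z := by
  classical
  set t : Finset (Fin N) := Finset.univ.filter fun y => σ.SameCycle x y with ht
  have hxt : x ∈ t := by simp [ht, Equiv.Perm.SameCycle.refl]
  have hne : t.Nonempty := ⟨x, hxt⟩
  have hmem : σ.SameCycle x (t.min' hne) := by
    have := t.min'_mem hne
    simp [ht] at this
    exact this
  refine ⟨t.min' hne, mem_minSet.mpr fun y hy => t.min'_le y ?_, hmem⟩
  simp only [ht, Finset.mem_filter, Finset.mem_univ, true_and]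
  exact hmem.trans hy

lemma card_minSet (σ : Equiv.Perm (Fin N)) (hd : ∀ x, σ x ≠ x) :
    (minSet σ).card = Multiset.card σ.cycleType := by
  classical
  rw [cycleType_def, Multiset.card_map]
  show (minSet σ).card = σ.cycleFactorsFinset.card
  apply Finset.card_bij (fun a _ => σ.cycleOf a)
  · intro a ha
    exact cycleOf_mem_cycleFactorsFinset_iff.mpr (mem_support.mpr (hd a))
  · intro a ha b hb h
    have hbb : b ∈ (σ.cycleOf b).support :=
      mem_support_cycleOf_iff.mpr ⟨Equiv.Perm.SameCycle.refl _ _, mem_support.mpr (hd b)⟩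
    rw [← h] at hbb
    exact minSet_unique ha hb (mem_support_cycleOf_iff.mp hbb).1
  · intro c hc
    obtain ⟨x, hx1, -⟩ := (mem_cycleFactorsFinset_iff.mp hc).1
    have hxc : x ∈ c.support := mem_support.mpr hx1
    obtain ⟨z, hz, hxz⟩ := exists_minSet_sameCycle σ x
    refine ⟨z, hz, ?_⟩
    rw [← hxz.cycleOf_eq]
    exact (cycle_is_cycleOf hxc hc).symm

section DataMap

variable (σ : Equiv.Perm (Fin N)) (hd : ∀ x, σ x ≠ x)
include hd

lemma inv_apply_not_mem_minSet {a : Fin N} (ha : a ∈ minSet σ) : σ⁻¹ a ∉ minSet σ := by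
  intro hmem
  have hsc : σ.SameCycle a (σ⁻¹ a) := ⟨-1, by simp⟩
  have heq : a = σ⁻¹ a := minSet_unique ha hmem hsc
  apply hd a
  nth_rewrite 1 [heq]
  exact σ.apply_symm_apply a

/-- `h` component : `σ⁻¹` restricted to the minima set. -/
def hEmb : ↥(minSet σ) ↪ ↥((minSet σ)ᶜ) where
  toFun a := ⟨σ⁻¹ a.1, Finset.mem_compl.mpr (inv_apply_not_mem_minSet σ hd a.2)⟩
  inj' := by
    intro a b hab
    apply Subtype.ext
    have := congrArg Subtype.val hab
    simpa using this

lemma mem_map_hEmb {x : Fin N} (hx : x ∈ (minSet σ)ᶜ) :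
    (⟨x, hx⟩ : ↥((minSet σ)ᶜ)) ∈ Finset.univ.map (hEmb σ hd) ↔ σ x ∈ minSet σ := by
  constructor
  · rintro h
    rw [Finset.mem_map] at h
    obtain ⟨a, -, ha⟩ := h
    have hvx : σ⁻¹ a.1 = x := congrArg Subtype.val ha
    rw [← hvx, Equiv.Perm.coe_inv, Equiv.apply_symm_apply]
    exact a.2
  · intro h
    rw [Finset.mem_map]
    refine ⟨⟨σ x, h⟩, Finset.mem_univ _, ?_⟩
    apply Subtype.ext
    simp [hEmb]

/-- `g` component : `σ` restricted off the minima set and the `σ⁻¹`-image of it. -/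
def gEmb : ↥((Finset.univ.map (hEmb σ hd))ᶜ) ↪ ↥((minSet σ)ᶜ) where
  toFun x := ⟨σ x.1.1, by
    rw [Finset.mem_compl]
    intro hmem
    have hx := x.1.2
    have := x.2
    rw [Finset.mem_compl] at this
    apply this
    rw [show x.1 = (⟨x.1.1, x.1.2⟩ : ↥((minSet σ)ᶜ)) from rfl, mem_map_hEmb σ hd]
    exact hmem⟩
  inj' := by
    intro a b hab
    have := congrArg Subtype.val hab
    simp only at this
    apply Subtype.ext; apply Subtype.ext
    exact σ.injective this

end DataMap

section Unique

variable {σ τ : Equiv.Perm (Fin N)}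

lemma firstHit (hdσ : ∀ x, σ x ≠ x) (hag : ∀ x, x ∉ minSet σ → σ x = τ x)
    {m : Fin N} (hm : m ∈ minSet σ) :
    ∃ k : ℕ, (τ ^ k) (σ m) = m ∧ ∀ j < k, (τ ^ j) (σ m) ∉ minSet σ := by
  have hper : ∃ l, 0 < l ∧ (σ ^ l) m = m :=
    ⟨orderOf σ, orderOf_pos σ, by rw [pow_orderOf_eq_one]; rfl⟩
  classical
  set l := Nat.find hper with hldef
  obtain ⟨hl0, hlm⟩ : 0 < l ∧ (σ ^ l) m = m := Nat.find_spec hper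
  have hl1 : 1 < l := by
    by_contra hcon
    push_neg at hcon
    have hone : l = 1 := by omega
    rw [hone, pow_one] at hlm
    exact hdσ m hlm
  have hmid : ∀ j, 0 < j → j < l → (σ ^ j) m ∉ minSet σ := by
    intro j hj0 hjl hmem
    have hsc : σ.SameCycle m ((σ ^ j) m) := ⟨(j : ℤ), by rw [zpow_natCast]⟩
    have heq : m = (σ ^ j) m := minSet_unique hm hmem hsc
    exact Nat.find_min hper hjl ⟨hj0, heq.symm⟩
  have hstep : ∀ i, i < l → (τ ^ i) (σ m) = (σ ^ (i + 1)) m := by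
    intro i
    induction i with
    | zero => intro _; simp
    | succ i ih =>
      intro hil
      have hi : i < l := by omega
      have h1 : (τ ^ (i + 1)) (σ m) = τ ((τ ^ i) (σ m)) := by
        rw [pow_succ']; rfl
      rw [h1, ih hi]
      have hnm : (σ ^ (i + 1)) m ∉ minSet σ := hmid (i+1) (by omega) hil
      rw [← hag _ hnm]
      have : (σ ^ (i + 1 + 1)) m = σ ((σ ^ (i+1)) m) := by rw [pow_succ']; rfl
      rw [this]
  refine ⟨l - 1, ?_, ?_⟩
  · have := hstep (l - 1) (by omega)
    rw [this]
    have : l - 1 + 1 = l := by omega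
    rw [this, hlm]
  · intro j hj
    rw [hstep j (by omega)]
    exact hmid (j+1) (by omega) (by omega)

lemma hit_unique (τ : Equiv.Perm (Fin N)) (S : Finset (Fin N)) {m x y : Fin N}
    (hx : τ⁻¹ x ∈ S) (hy : τ⁻¹ y ∈ S) {kx ky : ℕ}
    (hkx : (τ ^ kx) x = m) (hky : (τ ^ ky) y = m)
    (hmx : ∀ j < kx, (τ ^ j) x ∉ S) (hmy : ∀ j < ky, (τ ^ j) y ∉ S) : x = y := by
  have main : ∀ (x y : Fin N) (kx ky : ℕ), kx ≤ ky → τ⁻¹ x ∈ S →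
      (τ ^ kx) x = m → (τ ^ ky) y = m → (∀ j < ky, (τ ^ j) y ∉ S) → x = y := by
    intro x y kx ky hle hx hkx hky hmy
    have hxy : x = (τ ^ (ky - kx)) y := by
      apply (τ ^ kx).injective
      rw [hkx, ← hky]
      have : τ ^ kx * τ ^ (ky - kx) = τ ^ ky := by
        rw [← pow_add]; congr 1; omega
      rw [← this]; rfl
    rcases Nat.eq_or_lt_of_le hle with heq | hlt
    · rw [hxy, heq, Nat.sub_self]; simp
    · exfalso
      have hd : 0 < ky - kx := by omega
      have : τ⁻¹ x = (τ ^ (ky - kx - 1)) y := by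
        rw [hxy]
        have : τ ^ (ky - kx) = τ * τ ^ (ky - kx - 1) := by
          rw [← pow_succ']; congr 1; omega
        rw [this]
        simp [Equiv.Perm.mul_apply]
      rw [this] at hx
      exact hmy _ (by omega) hx
  rcases Nat.le_total kx ky with h | h
  · exact main x y kx ky h hx hkx hky hmy
  · exact (main y x ky kx h hy hky hkx hmx).symm

lemma eq_of_agree_off_minSet (hdσ : ∀ x, σ x ≠ x) (hdτ : ∀ x, τ x ≠ x)
    (hS : minSet σ = minSet τ) (hag : ∀ x, x ∉ minSet σ → σ x = τ x) : σ = τ := by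
  apply Equiv.ext
  intro w
  by_cases hw : w ∈ minSet σ
  · -- first hits
    obtain ⟨kx, hkx, hmx⟩ := firstHit hdσ hag hw
    obtain ⟨ky, hky, hmy⟩ := firstHit (τ := τ) hdτ (fun x _ => rfl) (hS ▸ hw)
    have hmy' : ∀ j < ky, (τ ^ j) (τ w) ∉ minSet σ := by
      intro j hj; rw [hS]; exact hmy j hj
    have hfx : τ⁻¹ (σ w) ∈ minSet σ := by
      by_contra hc
      have h1 : σ (τ⁻¹ (σ w)) = τ (τ⁻¹ (σ w)) := hag _ hc
      rw [Equiv.Perm.coe_inv, Equiv.apply_symm_apply] at h1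
      have h2 : τ⁻¹ (σ w) = w := σ.injective h1
      rw [h2] at hc
      exact hc hw
    have hfy : τ⁻¹ (τ w) ∈ minSet σ := by
      rw [Equiv.Perm.coe_inv, Equiv.symm_apply_apply]; exact hw
    exact hit_unique τ (minSet σ) hfx hfy hkx hky hmx hmy'
  · exact hag w hw

end Unique

section Count

variable (N s : ℕ)

/-- Target type of the encoding. -/
abbrev Tgt := Σ S : {S : Finset (Fin N) // S.card = s},
  Σ h : (↥(S.1) ↪ ↥((S.1)ᶜ)), (↥((Finset.univ.map h)ᶜ) ↪ ↥((S.1)ᶜ))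

/-- Flattening of the data, to access components without `HEq`. -/
def flat : Tgt N s → Finset (Fin N) × (Fin N → Fin N) := fun t =>
  ⟨t.1.1, fun x =>
    if hx : x ∈ t.1.1 then (t.2.1 ⟨x, hx⟩).1
    else if hr : (⟨x, Finset.mem_compl.mpr hx⟩ : ↥((t.1.1)ᶜ)) ∈ Finset.univ.map t.2.1 then x
    else (t.2.2 ⟨⟨x, Finset.mem_compl.mpr hx⟩, Finset.mem_compl.mpr hr⟩).1⟩

variable {N s}

lemma flat_spec_mem (t : Tgt N s) (x : Fin N) (hx : x ∈ t.1.1) :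
    (flat N s t).2 x = (t.2.1 ⟨x, hx⟩).1 := dif_pos hx

lemma flat_spec_hit (t : Tgt N s) (x : Fin N) (hx : x ∉ t.1.1)
    (hr : (⟨x, Finset.mem_compl.mpr hx⟩ : ↥((t.1.1)ᶜ)) ∈ Finset.univ.map t.2.1) :
    (flat N s t).2 x = x := by
  rw [flat]
  simp only
  rw [dif_neg hx, dif_pos hr]

lemma flat_spec_miss (t : Tgt N s) (x : Fin N) (hx : x ∉ t.1.1)
    (hr : (⟨x, Finset.mem_compl.mpr hx⟩ : ↥((t.1.1)ᶜ)) ∉ Finset.univ.map t.2.1) :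
    (flat N s t).2 x = (t.2.2 ⟨⟨x, Finset.mem_compl.mpr hx⟩, Finset.mem_compl.mpr hr⟩).1 := by
  rw [flat]
  simp only
  rw [dif_neg hx, dif_neg hr]

/-- The permutations counted by `d2 N s`. -/
abbrev XT (N s : ℕ) := {σ : Equiv.Perm (Fin N) //
  Multiset.card σ.cycleType = s ∧ σ.cycleType.sum = N}

lemma derangement_of_mem (σp : XT N s) : ∀ x, σp.1 x ≠ x := by
  intro x
  have hsum := σp.2.2
  rw [Equiv.Perm.sum_cycleType] at hsum
  have huniv : σp.1.support = Finset.univ := by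
    apply Finset.eq_univ_of_card
    rw [hsum, Fintype.card_fin]
  have : x ∈ σp.1.support := huniv ▸ Finset.mem_univ x
  exact Equiv.Perm.mem_support.mp this

variable (N s)

/-- The encoding map. -/
def F : XT N s → Tgt N s := fun σp =>
  ⟨⟨minSet σp.1, by
      rw [card_minSet _ (derangement_of_mem σp)]; exact σp.2.1⟩,
   hEmb σp.1 (derangement_of_mem σp),
   gEmb σp.1 (derangement_of_mem σp)⟩

lemma F_inj : Function.Injective (F N s) := by
  intro p q heq
  have hflat := congrArg (flat N s) heq
  set σ := p.1 with hσ
  set τ := q.1 with hτ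
  have hdσ : ∀ x, σ x ≠ x := derangement_of_mem p
  have hdτ : ∀ x, τ x ≠ x := derangement_of_mem q
  have hS : minSet σ = minSet τ := congrArg Prod.fst hflat
  have hu : ∀ x, (flat N s (F N s p)).2 x = (flat N s (F N s q)).2 x :=
    fun x => congrFun (congrArg Prod.snd hflat) x
  have hi : ∀ x, x ∈ minSet σ → σ⁻¹ x = τ⁻¹ x := by
    intro x hx
    have hxτ : x ∈ minSet τ := hS ▸ hx
    have h1 := flat_spec_mem (F N s p) x hx
    have h2 := flat_spec_mem (F N s q) x hxτ
    exact (h1.symm.trans (hu x)).trans h2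
  have hii : ∀ x, x ∉ minSet σ → σ x = τ x := by
    intro x hx
    by_cases hsx : σ x ∈ minSet σ
    · have h1 := hi (σ x) hsx
      have h2 : σ⁻¹ (σ x) = x := σ.symm_apply_apply x
      rw [h2] at h1
      have : τ (τ⁻¹ (σ x)) = τ x := by rw [← h1]
      rw [Equiv.Perm.coe_inv, Equiv.apply_symm_apply] at this
      exact this
    · -- σ-side is a miss
      have hxτ : x ∉ minSet τ := by rw [← hS]; exact hx
      have hrσ : (⟨x, Finset.mem_compl.mpr hx⟩ : ↥((minSet σ)ᶜ)) ∉
          Finset.univ.map (hEmb σ hdσ) := by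
        rw [mem_map_hEmb σ hdσ]
        exact hsx
      have h1 := flat_spec_miss (F N s p) x hx hrσ
      have hval1 : (flat N s (F N s p)).2 x = σ x := h1
      by_cases htx : τ x ∈ minSet τ
      · -- τ-side is a hit: value x, contradiction
        have hrτ : (⟨x, Finset.mem_compl.mpr hxτ⟩ : ↥((minSet τ)ᶜ)) ∈
            Finset.univ.map (hEmb τ hdτ) := by
          rw [mem_map_hEmb τ hdτ]
          exact htx
        have h2 := flat_spec_hit (F N s q) x hxτ hrτ
        have : σ x = x := hval1.symm.trans ((hu x).trans h2)
        exact absurd this (hdσ x)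
      · have hrτ : (⟨x, Finset.mem_compl.mpr hxτ⟩ : ↥((minSet τ)ᶜ)) ∉
            Finset.univ.map (hEmb τ hdτ) := by
          rw [mem_map_hEmb τ hdτ]
          exact htx
        have h2 := flat_spec_miss (F N s q) x hxτ hrτ
        have hval2 : (flat N s (F N s q)).2 x = τ x := h2
        exact hval1.symm.trans ((hu x).trans hval2)
  have : σ = τ := eq_of_agree_off_minSet hdσ hdτ hS hii
  exact Subtype.ext this

lemma card_Tgt (hs : 2*s ≤ N) : Fintype.card (Tgt N s) =
    N.choose s * ((N - s).descFactorial s * (N - s).descFactorial (N - 2*s)) := by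
  classical
  rw [Fintype.card_sigma]
  have hfin : ∀ S : {S : Finset (Fin N) // S.card = s},
      Fintype.card (Σ h : (↥(S.1) ↪ ↥((S.1)ᶜ)), (↥((Finset.univ.map h)ᶜ) ↪ ↥((S.1)ᶜ)))
        = (N - s).descFactorial s * (N - s).descFactorial (N - 2*s) := by
    intro S
    rw [Fintype.card_sigma]
    have hcS : Fintype.card ↥(S.1) = s := by rw [Fintype.card_coe, S.2]
    have hcSc : Fintype.card ↥((S.1)ᶜ) = N - s := by
      rw [Fintype.card_coe, Finset.card_compl, S.2, Fintype.card_fin]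
    have hterm : ∀ h : (↥(S.1) ↪ ↥((S.1)ᶜ)),
        Fintype.card ↥((Finset.univ.map h)ᶜ) = N - 2*s := by
      intro h
      rw [Fintype.card_coe, Finset.card_compl, Finset.card_map, Finset.card_univ, hcS, hcSc]
      omega
    calc (∑ h : (↥(S.1) ↪ ↥((S.1)ᶜ)), Fintype.card (↥((Finset.univ.map h)ᶜ) ↪ ↥((S.1)ᶜ)))
        = ∑ _h : (↥(S.1) ↪ ↥((S.1)ᶜ)), (N - s).descFactorial (N - 2*s) := by
          apply Finset.sum_congr rfl
          intro h _
          rw [Fintype.card_embedding_eq, hterm h, hcSc]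
      _ = Fintype.card (↥(S.1) ↪ ↥((S.1)ᶜ)) * (N - s).descFactorial (N - 2*s) := by
          rw [Finset.sum_const, Finset.card_univ, smul_eq_mul]
      _ = (N - s).descFactorial s * (N - s).descFactorial (N - 2*s) := by
          rw [Fintype.card_embedding_eq, hcS, hcSc]
  calc (∑ S : {S : Finset (Fin N) // S.card = s}, Fintype.card _)
      = ∑ _S : {S : Finset (Fin N) // S.card = s},
          (N - s).descFactorial s * (N - s).descFactorial (N - 2*s) := by
        apply Finset.sum_congr rfl
        intro S _
        exact hfin S
    _ = Fintype.card {S : Finset (Fin N) // S.card = s} *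
          ((N - s).descFactorial s * (N - s).descFactorial (N - 2*s)) := by
        rw [Finset.sum_const, Finset.card_univ, smul_eq_mul]
    _ = N.choose s * ((N - s).descFactorial s * (N - s).descFactorial (N - 2*s)) := by
        rw [Fintype.card_finset_len, Fintype.card_fin]

end Count

/-- The combinatorial bound. -/
lemma d2_le_bound (m s : ℕ) (hsm : s ≤ m) :
    d2 (2*m) s ≤ (2*m).choose s *
      ((2*m - s).descFactorial s * (2*m - s).descFactorial (2*m - 2*s)) := by
  have h1 : d2 (2*m) s = Fintype.card (XT (2*m) s) := Fintype.card_congr (Equiv.refl _)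
  calc d2 (2*m) s = Fintype.card (XT (2*m) s) := h1
    _ ≤ Fintype.card (Tgt (2*m) s) := Fintype.card_le_of_injective _ (F_inj (2*m) s)
    _ = (2*m).choose s *
        ((2*m - s).descFactorial s * (2*m - s).descFactorial (2*m - 2*s)) :=
      card_Tgt (2*m) s (by omega)

end G2mAux

open G2mAux in
private theorem G2m_bound_aux (α z : ℝ) (hα : α ∈ Set.Ioo (0 : ℝ) 1) (hz : 0 < z)
    (mz : ℕ) (hmz : mz = Nat.floor (α * z / 4)) (h1 : 1 ≤ mz) :
    G2m mz z ≤ α ^ mz / (4 * (1 - α)) := by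
  obtain ⟨hα0, hα1⟩ := hα
  have h1α : (0:ℝ) < 1 - α := by linarith
  have hfloor : (mz : ℝ) ≤ α * z / 4 := by
    rw [hmz]
    exact Nat.floor_le (by positivity)
  have hmz0 : (0:ℝ) < mz := by exact_mod_cast h1
  have h4mz : (0:ℝ) < 4 * mz := by linarith
  have hzinv : z⁻¹ ≤ α / (4 * mz) := by
    rw [inv_eq_one_div, div_le_div_iff₀ hz h4mz]
    nlinarith [hfloor]
  have hzinv0 : (0:ℝ) ≤ z⁻¹ := by positivity
  have hzpow : z ^ (-(2 * (mz:ℤ))) = (z⁻¹) ^ (2*mz) := by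
    have hc : (-(2*(mz:ℤ))) = -((2*mz : ℕ) : ℤ) := by push_cast; ring
    rw [hc, _root_.zpow_neg, _root_.zpow_natCast, _root_.inv_pow]
  rcases eq_or_lt_of_le h1 with hm1 | hm2
  · -- mz = 1
    have hm1' : mz = 1 := hm1.symm
    subst hm1'
    have hd21 : d2 2 1 = 1 := by decide
    have : G2m 1 z = z⁻¹ := by
      rw [G2m]
      norm_num [hd21]
      rw [show z ^ 2 = z * z by ring]
      field_simp
    rw [this]
    have h2 : z⁻¹ ≤ α / 4 := by
      calc z⁻¹ ≤ α / (4 * 1) := by simpa using hzinv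
        _ = α / 4 := by norm_num
    calc z⁻¹ ≤ α / 4 := h2
      _ ≤ α ^ 1 / (4 * (1 - α)) := by
        rw [pow_one]
        apply div_le_div_of_nonneg_left (le_of_lt hα0) (by linarith)
        nlinarith
  · -- 2 ≤ mz
    have hmz2 : 2 ≤ mz := hm2
    have hstep : G2m mz z ≤ ∑ s ∈ Finset.Icc 1 mz, α ^ (2*mz - s) / 4 := by
      rw [G2m, hzpow, Finset.mul_sum]
      apply Finset.sum_le_sum
      intro s hs
      obtain ⟨hs1, hsm⟩ := Finset.mem_Icc.mp hs
      have hterm : (z⁻¹) ^ (2*mz) * ((d2 (2*mz) s : ℝ) * z ^ s)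
          = (d2 (2*mz) s : ℝ) * (z⁻¹) ^ (2*mz - s) := by
        have hsplit : (z⁻¹) ^ (2*mz) = (z⁻¹) ^ (2*mz - s) * (z⁻¹) ^ s := by
          rw [← pow_add]
          congr 1
          omega
        have hone : (z⁻¹) ^ s * z ^ s = 1 := by
          rw [← mul_pow, inv_mul_cancel₀ (ne_of_gt hz), one_pow]
        calc (z⁻¹) ^ (2*mz) * ((d2 (2*mz) s : ℝ) * z ^ s)
            = (d2 (2*mz) s : ℝ) * (z⁻¹) ^ (2*mz - s) * ((z⁻¹) ^ s * z ^ s) := by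
              rw [hsplit]; ring
          _ = (d2 (2*mz) s : ℝ) * (z⁻¹) ^ (2*mz - s) := by rw [hone, mul_one]
      rw [hterm]
      set k := 2*mz - s with hk
      set B : ℕ := (2*mz).choose s *
        ((2*mz - s).descFactorial s * (2*mz - s).descFactorial (2*mz - 2*s)) with hB
      have hd2B : (d2 (2*mz) s : ℝ) ≤ (B:ℝ) := by
        exact_mod_cast d2_le_bound mz s hsm
      have hkey : (4:ℝ) * B ≤ (4*(mz:ℝ)) ^ k := by
        have := KEY mz s hmz2 hs1 hsm
        have hcast : ((4*mz:ℕ) : ℝ) ^ k = (4*(mz:ℝ))^k := by push_cast; ring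
        calc (4:ℝ) * B = ((4 * B : ℕ) : ℝ) := by push_cast; ring
          _ ≤ (((4*mz) ^ (2*mz - s) : ℕ) : ℝ) := by exact_mod_cast this
          _ = (4*(mz:ℝ))^k := by rw [← hk] at *; push_cast; ring
      have hp1 : (z⁻¹) ^ k ≤ (α / (4*mz)) ^ k := pow_le_pow_left₀ hzinv0 hzinv k
      have h4k : (0:ℝ) < (4*(mz:ℝ))^k := by positivity
      calc (d2 (2*mz) s : ℝ) * (z⁻¹) ^ k
          ≤ (B:ℝ) * (α / (4*mz)) ^ k := by
            apply mul_le_mul hd2B hp1 (by positivity) (Nat.cast_nonneg _)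
        _ = (B:ℝ) * α ^ k / (4*(mz:ℝ))^k := by rw [div_pow]; ring
        _ ≤ ((4*(mz:ℝ))^k / 4) * α ^ k / (4*(mz:ℝ))^k := by
            apply div_le_div_of_nonneg_right ?_ h4k.le
            apply mul_le_mul_of_nonneg_right ?_ (pow_nonneg (le_of_lt hα0) k)
            linarith [hkey]
        _ = α ^ k / 4 := by field_simp
    have hgeom : ∑ s ∈ Finset.Icc 1 mz, α ^ (2*mz - s) / 4
        ≤ α ^ mz / (4 * (1 - α)) := by
      have hsplit : ∀ s ∈ Finset.Icc 1 mz, α ^ (2*mz - s) / 4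
          = (α ^ mz / 4) * α ^ (mz - s) := by
        intro s hs
        obtain ⟨hs1, hsm⟩ := Finset.mem_Icc.mp hs
        rw [show 2*mz - s = mz + (mz - s) by omega, pow_add]
        ring
      rw [Finset.sum_congr rfl hsplit, ← Finset.mul_sum]
      have hre : ∑ s ∈ Finset.Icc 1 mz, α ^ (mz - s) = ∑ j ∈ Finset.range mz, α ^ j := by
        apply Finset.sum_nbij' (fun s => mz - s) (fun j => mz - j)
        · intro s hs
          obtain ⟨hs1, hsm⟩ := Finset.mem_Icc.mp hs
          exact Finset.mem_range.mpr (by omega)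
        · intro j hj
          have := Finset.mem_range.mp hj
          exact Finset.mem_Icc.mpr (by omega)
        · intro s hs
          obtain ⟨hs1, hsm⟩ := Finset.mem_Icc.mp hs
          omega
        · intro j hj
          have := Finset.mem_range.mp hj
          omega
        · intro s hs
          rfl
      rw [hre]
      have hgs : ∑ j ∈ Finset.range mz, α ^ j ≤ 1 / (1 - α) := by
        rw [geom_sum_eq (ne_of_lt hα1)]
        have heq : (α ^ mz - 1)/(α - 1) = (1 - α ^ mz)/(1 - α) := by
          rw [← neg_div_neg_eq]
          ring_nf
        rw [heq, div_le_div_iff₀ h1α h1α]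
        have hpow : (0:ℝ) ≤ α ^ mz := by positivity
        nlinarith
      calc (α ^ mz / 4) * ∑ j ∈ Finset.range mz, α ^ j
          ≤ (α ^ mz / 4) * (1 / (1 - α)) := by
            apply mul_le_mul_of_nonneg_left hgs (by positivity)
        _ = α ^ mz / (4 * (1 - α)) := by field_simp
    exact le_trans hstep hgeom

end G2mBoundAux

/-- For `α ∈ (0,1)`, `z > 0` and `m_z = ⌊αz/4⌋ ≥ 1` one has
`G_{2m_z}(z) ≤ α^{m_z}/(4(1−α))`. -/
theorem G2m_bound (α z : ℝ) (hα : α ∈ Set.Ioo (0 : ℝ) 1) (hz : 0 < z)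
    (mz : ℕ) (hmz : mz = Nat.floor (α * z / 4)) (h1 : 1 ≤ mz) :
    G2m mz z ≤ α ^ mz / (4 * (1 - α)) := by
  exact G2m_bound_aux α z hα hz mz hmz h1
end

section
/- Let A ∈ ℂ^{n×N} be a matrix with columns a_1,…,a_N each of ℓ²-norm at most 1, and coherence μ = max_{i≠j} |⟨a_i, a_j⟩|. Let Λ ⊆ {1,…,N} with |Λ| = S, let A_Λ be the column submatrix indexed by Λ, and suppose ‖I_Λ − A_Λ* A_Λ‖ ≤ δ for some δ ∈ (0,1) (spectral norm), so that A_Λ* A_Λ is invertible. Then for every ρ ∉ Λ, ‖(A_Λ* A_Λ)^{−1} A_Λ* a_ρ‖₂ ≤ √S · μ / (1 − δ). -/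
open MeasureTheory Complex Matrix

lemma l2norm_eq {ι : Type*} [Fintype ι] (z : ι → ℂ) :
    l2norm z = ‖(WithLp.equiv 2 (ι → ℂ)).symm z‖ := by
  rw [EuclideanSpace.norm_eq]
  simp [l2norm]

lemma l2norm_nonneg' {ι : Type*} [Fintype ι] (z : ι → ℂ) : 0 ≤ l2norm z :=
  Real.sqrt_nonneg _

lemma l2norm_mulVec_le {ι κ : Type*} [Fintype ι] [Fintype κ] [DecidableEq κ]
    (M : Matrix ι κ ℂ) (x : κ → ℂ) :
    l2norm (M.mulVec x) ≤ specNorm M * l2norm x := by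
  rw [l2norm_eq, l2norm_eq, WithLp.equiv_symm_apply, ← Matrix.toEuclideanLin_apply_piLp_toLp]
  exact (LinearMap.toContinuousLinearMap (Matrix.toEuclideanLin M)).le_opNorm _

lemma l2norm_add_le {ι : Type*} [Fintype ι] (u v : ι → ℂ) :
    l2norm (u + v) ≤ l2norm u + l2norm v := by
  simp only [l2norm_eq, WithLp.equiv_symm_apply, WithLp.toLp_add]
  exact norm_add_le _ _

lemma l2norm_eq_zero_iff {ι : Type*} [Fintype ι] (z : ι → ℂ) :
    l2norm z = 0 ↔ z = 0 := by
  rw [l2norm_eq, norm_eq_zero]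
  constructor
  · intro h
    have := congrArg (WithLp.equiv 2 (ι → ℂ)) h
    simpa using this
  · rintro rfl; simp

/-- For a matrix `A` with columns of ℓ²-norm at most 1 and coherence
`μ = max_{i≠j} |⟨a_i, a_j⟩|`, if `‖I_Λ − A_Λ* A_Λ‖ ≤ δ` for some `δ ∈ (0,1)`, then for every
`ρ ∉ Λ`: `‖(A_Λ* A_Λ)^{−1} A_Λ* a_ρ‖₂ ≤ √S μ/(1−δ)` where `S = |Λ|`. -/
theorem pseudoinverse_column_bound (n N : ℕ) (A : Matrix (Fin n) (Fin N) ℂ)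
    (hcols : ∀ j, l2norm (fun i => A i j) ≤ 1)
    (μ : ℝ)
    (hμ : μ = ⨆ p : {p : Fin N × Fin N // p.1 ≠ p.2},
        ‖dotc (fun i => A i p.val.1) (fun i => A i p.val.2)‖)
    (Λ : Finset (Fin N)) (S : ℕ) (hΛ : Λ.card = S)
    (δ : ℝ) (hδ : δ ∈ Set.Ioo (0 : ℝ) 1)
    (hnorm : specNorm ((1 : Matrix ↥Λ ↥Λ ℂ) - (colSub A Λ)ᴴ * colSub A Λ) ≤ δ)
    (ρ : Fin N) (hρ : ρ ∉ Λ) :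
    l2norm ((((colSub A Λ)ᴴ * colSub A Λ)⁻¹ * (colSub A Λ)ᴴ).mulVec fun i => A i ρ)
      ≤ Real.sqrt S * μ / (1 - δ) := by
  obtain ⟨hδ0, hδ1⟩ := hδ
  have h1δ : (0:ℝ) < 1 - δ := by linarith
  set AΛ := colSub A Λ with hAΛ
  set G := AΛᴴ * AΛ with hG
  -- contraction property of 1 - G
  have hcontr : ∀ x : ↥Λ → ℂ,
      l2norm (((1 : Matrix ↥Λ ↥Λ ℂ) - G).mulVec x) ≤ δ * l2norm x := by
    intro x
    calc l2norm (((1 : Matrix ↥Λ ↥Λ ℂ) - G).mulVec x)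
        ≤ specNorm ((1 : Matrix ↥Λ ↥Λ ℂ) - G) * l2norm x := l2norm_mulVec_le _ _
      _ ≤ δ * l2norm x := mul_le_mul_of_nonneg_right hnorm (l2norm_nonneg' x)
  -- G is invertible
  have hinj : Function.Injective G.mulVec := by
    intro x y hxy
    have hx : G.mulVec (x - y) = 0 := by rw [Matrix.mulVec_sub, hxy, sub_self]
    have h1 : ((1 : Matrix ↥Λ ↥Λ ℂ) - G).mulVec (x - y) = x - y := by
      rw [Matrix.sub_mulVec, hx, Matrix.one_mulVec, sub_zero]
    have h2 := hcontr (x - y)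
    rw [h1] at h2
    have h3 : l2norm (x - y) = 0 := by nlinarith [l2norm_nonneg' (x - y)]
    have h4 := (l2norm_eq_zero_iff (x - y)).mp h3
    exact sub_eq_zero.mp h4
  have hdet : IsUnit G.det :=
    (Matrix.isUnit_iff_isUnit_det _).mp (Matrix.mulVec_injective_iff_isUnit.mp hinj)
  set v : ↥Λ → ℂ := AΛᴴ.mulVec (fun i => A i ρ) with hv
  set w : ↥Λ → ℂ := (G⁻¹ * AΛᴴ).mulVec (fun i => A i ρ) with hw
  have hGw : G.mulVec w = v := by
    show G *ᵥ ((G⁻¹ * AΛᴴ) *ᵥ _) = _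
    rw [Matrix.mulVec_mulVec, ← Matrix.mul_assoc, Matrix.mul_nonsing_inv _ hdet,
      Matrix.one_mul]
  -- the key inequality
  have hsplit : l2norm w ≤ δ * l2norm w + l2norm v := by
    have hdecomp : w = ((1 : Matrix ↥Λ ↥Λ ℂ) - G).mulVec w + G.mulVec w := by
      rw [Matrix.sub_mulVec, Matrix.one_mulVec]; ring
    calc l2norm w = l2norm (((1 : Matrix ↥Λ ↥Λ ℂ) - G).mulVec w + G.mulVec w) := by
          rw [← hdecomp]
      _ ≤ l2norm (((1 : Matrix ↥Λ ↥Λ ℂ) - G).mulVec w) + l2norm (G.mulVec w) :=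
          l2norm_add_le _ _
      _ ≤ δ * l2norm w + l2norm v := by
          rw [hGw]; exact add_le_add_left (hcontr w) _
  -- bound l2norm v
  rcases Finset.eq_empty_or_nonempty Λ with hE | ⟨lam0, hlam0⟩
  · subst hE
    have hS : S = 0 := hΛ.symm
    subst hS
    have : l2norm w = 0 := by
      rw [l2norm]
      simp
    rw [this]
    simp
  · -- μ bounds each inner product, and μ ≥ 0
    have hbdd : BddAbove (Set.range fun p : {p : Fin N × Fin N // p.1 ≠ p.2} =>
        ‖dotc (fun i => A i p.val.1) (fun i => A i p.val.2)‖) :=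
      Set.Finite.bddAbove (Set.finite_range _)
    have hentry : ∀ lam : ↥Λ, ‖v lam‖ ≤ μ := by
      intro lam
      have hne : (lam : Fin N) ≠ ρ := fun h => hρ (h ▸ lam.2)
      have hterm := le_ciSup hbdd ⟨((lam : Fin N), ρ), hne⟩
      rw [← hμ] at hterm
      have hval : v lam
          = (starRingEnd ℂ) (dotc (fun i => A i (lam : Fin N)) (fun i => A i ρ)) := by
        simp only [hv, Matrix.mulVec, dotProduct, Matrix.conjTranspose_apply, dotc,
          map_sum, _root_.map_mul, Complex.conj_conj]
        simp [hAΛ, colSub, mul_comm]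
      calc ‖v lam‖
          = ‖dotc (fun i => A i (lam : Fin N)) (fun i => A i ρ)‖ := by
            rw [hval]; exact Complex.norm_conj _
        _ ≤ μ := by simpa using hterm
    have hμ0 : 0 ≤ μ := le_trans (norm_nonneg _) (hentry ⟨lam0, hlam0⟩)
    have hvbound : l2norm v ≤ Real.sqrt S * μ := by
      rw [l2norm, ← Real.sqrt_sq hμ0, ← Real.sqrt_mul (Nat.cast_nonneg S)]
      apply Real.sqrt_le_sqrt
      calc ∑ lam : ↥Λ, ‖v lam‖ ^ 2
          ≤ ∑ _lam : ↥Λ, μ ^ 2 := by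
            apply Finset.sum_le_sum
            intro i _
            exact pow_le_pow_left₀ (norm_nonneg _) (hentry i) 2
        _ = (S : ℝ) * μ ^ 2 := by
            rw [Finset.sum_const, nsmul_eq_mul]
            congr 1
            simp [hΛ]
    -- conclude
    have key : (1 - δ) * l2norm w ≤ Real.sqrt S * μ := by nlinarith
    rw [le_div_iff₀ h1δ]
    linarith
end
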